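/- Let V be a finite-dimensional vector space over a field k. The natural pairing between V and V* induces a perfect pairing between the n-th divided power Sym^{PD,n}(V) := (V^{⊗n})^{S_n} (symmetric tensors, i.e. S_n-invariants of V^{⊗n}) and the n-th symmetric power Sym^n(V*), given by ⟨v_1⊗···⊗v_n, f_1···f_n⟩ = Σ_{σ∈S_n} Π_i f_i(v_{σ(i)}) restricted to invariant tensors. In particular both spaces have the same dimension binom(dim V + n - 1, n) and the pairing is nondegenerate in arbitrary characteristic. -/

import Mathlib

open scoped TensorProduct
open PiTensorProduct

noncomputable section Frozen

variable (k : Type*) [Field k] (V : Type*) [AddCommGroup V] [Module k V]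
  [FiniteDimensional k V] (n : ℕ)

/-- Permutation of tensor factors on `V^{⊗n}`. -/
def permV (e : Equiv.Perm (Fin n)) : (⨂[k] _ : Fin n, V) →ₗ[k] (⨂[k] _ : Fin n, V) :=
  (PiTensorProduct.reindex k (fun _ : Fin n => V) e).toLinearMap

/-- Symmetric tensors `Sym^{PD,n}(V) = (V^{⊗n})^{S_n}`. -/
def symPD : Submodule k (⨂[k] _ : Fin n, V) :=
  ⨅ e : Equiv.Perm (Fin n), LinearMap.eqLocus (permV k V n e) LinearMap.id

/-- Permutation of tensor factors on `(V*)^{⊗n}`. -/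
def permD (e : Equiv.Perm (Fin n)) :
    (⨂[k] _ : Fin n, (V →ₗ[k] k)) →ₗ[k] (⨂[k] _ : Fin n, (V →ₗ[k] k)) :=
  (PiTensorProduct.reindex k (fun _ : Fin n => Module.Dual k V) e).toLinearMap

instance symPowDualTensorAddCommGroup : AddCommGroup (⨂[k] _ : Fin n, (V →ₗ[k] k)) :=
  Module.addCommMonoidToAddCommGroup k

/-- The submodule by which one divides to get `Sym^n(V*)`: the span of the elements
`x - e·x`. -/
def symRelations : Submodule k (⨂[k] _ : Fin n, (V →ₗ[k] k)) :=
  ⨆ e : Equiv.Perm (Fin n),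
    LinearMap.range ((permD k V n e - (LinearMap.id :
        (⨂[k] _ : Fin n, (V →ₗ[k] k)) →ₗ[k] (⨂[k] _ : Fin n, (V →ₗ[k] k))) :
      (⨂[k] _ : Fin n, (V →ₗ[k] k)) →ₗ[k] (⨂[k] _ : Fin n, (V →ₗ[k] k))))

/-- The natural pairing `(V*)^{⊗n} → (V^{⊗n})*`, `f₁⊗⋯⊗fₙ ↦ (v₁⊗⋯⊗vₙ ↦ Π f_i(v_i))`. -/
def naturalPairing :
    (⨂[k] _ : Fin n, (V →ₗ[k] k)) →ₗ[k] Module.Dual k (⨂[k] _ : Fin n, V) :=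
  (LinearMap.llcomp k (⨂[k] _ : Fin n, V) (⨂[k] _ : Fin n, k) k
      (PiTensorProduct.lift (MultilinearMap.mkPiAlgebra k (Fin n) k))).comp
    PiTensorProduct.piTensorHomMap

end Frozen

noncomputable section Helpers

/-! ### Abstract permutation modules -/

section Abstract

variable {k M X G : Type*} [Field k] [AddCommGroup M] [Module k M] [Group G]

/-- Orbit setoid of a permutation action given by a monoid hom to `Equiv.Perm X`. -/
def actRel (act : G →* Equiv.Perm X) : Setoid X where
  r x y := ∃ g : G, act g x = y
  iseqv := by
    refine ⟨fun x => ⟨1, by simp⟩, ?_, ?_⟩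
    · rintro x y ⟨g, rfl⟩
      exact ⟨g⁻¹, by simp⟩
    · rintro x y z ⟨g, rfl⟩ ⟨h, rfl⟩
      exact ⟨h * g, by simp⟩

variable (act : G →* Equiv.Perm X) (b : Module.Basis X k M) (T : G → M →ₗ[k] M)

theorem actRel_mk_act (g : G) (x : X) :
    Quotient.mk (actRel act) (act g x) = Quotient.mk (actRel act) x :=
  Quotient.sound' ⟨g⁻¹, by simp⟩

theorem actRel_exists_out (x : X) :
    ∃ g : G, act g ((Quotient.mk (actRel act) x).out) = x := by
  have h : Quotient.mk (actRel act) ((Quotient.mk (actRel act) x).out)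
      = Quotient.mk (actRel act) x := Quotient.out_eq _
  exact Quotient.exact h

/-- Coinvariants: quotient by relations is free on orbits. -/
def coinvEquiv (hT : ∀ g x, T g (b x) = b (act g x)) :
    (M ⧸ ⨆ g : G, LinearMap.range (T g - LinearMap.id)) ≃ₗ[k]
      (Quotient (actRel act) →₀ k) := by
  classical
  set R : Submodule k M := ⨆ g : G, LinearMap.range (T g - LinearMap.id) with hR
  set φ : M →ₗ[k] (Quotient (actRel act) →₀ k) :=
    Module.Basis.constr b k fun x => Finsupp.single (Quotient.mk (actRel act) x) 1 with hφ
  have hle : R ≤ LinearMap.ker φ := by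
    rw [hR, iSup_le_iff]
    intro g
    rw [LinearMap.range_le_ker_iff]
    apply b.ext
    intro x
    simp [hφ, Module.Basis.constr_basis, hT, actRel_mk_act act g x]
  set ψ : (Quotient (actRel act) →₀ k) →ₗ[k] (M ⧸ R) :=
    Finsupp.linearCombination k fun q => Submodule.Quotient.mk (b q.out) with hψ
  refine LinearEquiv.ofLinear (R.liftQ φ hle) ψ ?_ ?_
  · apply Finsupp.lhom_ext
    intro q c
    have : Quotient.mk (actRel act) (Quotient.out q) = q := Quotient.out_eq q
    simp [hψ, hφ, Finsupp.linearCombination_single, Module.Basis.constr_basis, this,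
      Finsupp.smul_single]
  · apply Submodule.linearMap_qext
    apply b.ext
    intro x
    obtain ⟨g, hg⟩ := actRel_exists_out act x
    have hmem : b x - b ((Quotient.mk (actRel act) x).out) ∈ R := by
      have : b x - b ((Quotient.mk (actRel act) x).out)
          = (T g - (LinearMap.id : M →ₗ[k] M)) (b ((Quotient.mk (actRel act) x).out)) := by
        simp [hT, hg]
      rw [this]
      exact le_iSup (fun g : G => LinearMap.range (T g - LinearMap.id)) g
        (LinearMap.mem_range_self _ _)
    have : Submodule.Quotient.mk (p := R) (b ((Quotient.mk (actRel act) x).out))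
        = Submodule.Quotient.mk (b x) :=
      ((Submodule.Quotient.eq R).mpr (by simpa using neg_mem hmem))
    simp [hψ, hφ, Module.Basis.constr_basis, Finsupp.linearCombination_single, this]

variable [Fintype X]

theorem repr_T_apply (hT : ∀ g x, T g (b x) = b (act g x)) (g : G) (m : M) (x : X) :
    b.repr (T g m) (act g x) = b.repr m x := by
  classical
  have : (Finsupp.lapply (act g x) ∘ₗ (b.repr.toLinearMap ∘ₗ T g))
      = (Finsupp.lapply x ∘ₗ b.repr.toLinearMap) := by
    apply b.ext
    intro y
    simp [hT, Finsupp.single_apply, (act g).injective.eq_iff]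
  exact LinearMap.congr_fun this m

/-- Invariants: the invariant submodule is free on orbits. -/
def invEquiv (hT : ∀ g x, T g (b x) = b (act g x)) :
    ↥(⨅ g : G, LinearMap.eqLocus (T g) (LinearMap.id : M →ₗ[k] M)) ≃ₗ[k]
      (Quotient (actRel act) →₀ k) := by
  classical
  set N : Submodule k M := ⨅ g : G, LinearMap.eqLocus (T g) LinearMap.id with hN
  have hmemN : ∀ m : M, m ∈ N ↔ ∀ g : G, T g m = m := by
    intro m
    simp [hN, Submodule.mem_iInf, LinearMap.mem_eqLocus]
  -- coefficients of invariants are constant on orbits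
  have hconst : ∀ m : M, m ∈ N → ∀ g : G, ∀ x : X, b.repr m (act g x) = b.repr m x := by
    intro m hm g x
    have := repr_T_apply act b T hT g m x
    rwa [(hmemN m).mp hm g] at this
  set toMap : N →ₗ[k] (Quotient (actRel act) →₀ k) :=
    (Finsupp.lcomapDomain (Quotient.out : Quotient (actRel act) → X)
      Quotient.out_injective) ∘ₗ (b.repr.toLinearMap ∘ₗ N.subtype) with htoMap
  have htoMap_apply : ∀ (m : N) (q : Quotient (actRel act)),
      toMap m q = b.repr (m : M) q.out := by
    intro m q
    simp [htoMap, Finsupp.lcomapDomain, Finsupp.comapDomain_apply]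
  -- the orbit sums
  set s : Quotient (actRel act) → M :=
    fun q => ∑ x ∈ Finset.univ.filter (fun x => Quotient.mk (actRel act) x = q), b x with hs
  have hsmem : ∀ q, s q ∈ N := by
    intro q
    rw [hmemN]
    intro g
    rw [hs]
    rw [map_sum]
    simp only [hT]
    refine Finset.sum_equiv (act g : Equiv.Perm X) ?_ ?_
    · intro x
      simp only [Finset.mem_filter, Finset.mem_univ, true_and]
      rw [actRel_mk_act]
    · intro x _
      rfl
  have hsrepr : ∀ q y, b.repr (s q) y = if Quotient.mk (actRel act) y = q then 1 else 0 := by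
    intro q y
    rw [hs, map_sum, Finsupp.finset_sum_apply]
    simp only [Module.Basis.repr_self, Finsupp.single_apply]
    rw [Finset.sum_ite_eq' (Finset.univ.filter fun x => Quotient.mk (actRel act) x = q) y
      (fun _ => (1 : k))]
    simp [Finset.mem_filter]
  have hinj : Function.Injective toMap := by
    rw [injective_iff_map_eq_zero]
    intro m hm0
    have hz : ∀ q : Quotient (actRel act), b.repr (m : M) q.out = 0 := by
      intro q
      rw [← htoMap_apply m q, hm0]
      rfl
    have : ∀ x : X, b.repr (m : M) x = 0 := by
      intro x
      obtain ⟨g, hg⟩ := actRel_exists_out act x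
      rw [← hg, hconst (m : M) m.2 g _, hz]
    have hm : (m : M) = 0 := by
      apply b.repr.injective
      rw [map_zero]
      ext x
      exact this x
    exact Subtype.ext hm
  have hsurj : Function.Surjective toMap := by
    intro l
    refine ⟨(Finsupp.linearCombination k (fun q => (⟨s q, hsmem q⟩ : N))) l, ?_⟩
    rw [← LinearMap.comp_apply]
    have : (toMap ∘ₗ Finsupp.linearCombination k (fun q => (⟨s q, hsmem q⟩ : N)))
        = LinearMap.id := by
      apply Finsupp.lhom_ext
      intro q c
      ext p
      simp only [LinearMap.comp_apply, Finsupp.linearCombination_single, LinearMap.id_apply]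
      rw [map_smul]
      rw [Finsupp.smul_apply]
      rw [htoMap_apply]
      simp only [hsrepr, Quotient.out_eq]
      rw [Finsupp.single_apply]
      by_cases h : q = p <;> simp [h, eq_comm]
    rw [this, LinearMap.id_apply]
  exact LinearEquiv.ofBijective toMap ⟨hinj, hsurj⟩

end Abstract


/-! ### A basis of the tensor power -/

section TensorBasis

variable {k : Type*} [Field k] {W : Type*} [AddCommGroup W] [Module k W]
  {ι : Type*} [Fintype ι] [DecidableEq ι] (n : ℕ) (c : Module.Basis ι k W)

/-- Candidate basis vectors of `W^{⊗ n}`. -/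
def tbFun (f : Fin n → ι) : ⨂[k] _ : Fin n, W :=
  tprod k fun i => c (f i)

/-- Coordinate functionals. -/
def tbCoord (f : Fin n → ι) : (⨂[k] _ : Fin n, W) →ₗ[k] k :=
  PiTensorProduct.lift
    ((MultilinearMap.mkPiAlgebra k (Fin n) k).compLinearMap fun i => c.coord (f i))

theorem tbCoord_tprod (f : Fin n → ι) (v : Fin n → W) :
    tbCoord n c f (tprod k v) = ∏ i, c.coord (f i) (v i) := by
  simp [tbCoord, PiTensorProduct.lift.tprod, MultilinearMap.compLinearMap_apply,
    MultilinearMap.mkPiAlgebra_apply]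

/-- All coordinates together. -/
def tbToFun : (⨂[k] _ : Fin n, W) →ₗ[k] ((Fin n → ι) →₀ k) :=
  (Finsupp.linearEquivFunOnFinite k k (Fin n → ι)).symm.toLinearMap.comp
    (LinearMap.pi fun f => tbCoord n c f)

/-- From coordinates back. -/
def tbOfFun : ((Fin n → ι) →₀ k) →ₗ[k] (⨂[k] _ : Fin n, W) :=
  Finsupp.linearCombination k (tbFun n c)

theorem tbCoord_tbFun (f g : Fin n → ι) :
    tbCoord n c g (tbFun n c f) = if f = g then (1 : k) else 0 := by
  rw [tbFun, tbCoord_tprod]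
  by_cases h : f = g
  · subst h
    simp
  · obtain ⟨i, hi⟩ := Function.ne_iff.mp h
    rw [if_neg h]
    apply Finset.prod_eq_zero (Finset.mem_univ i)
    rw [Module.Basis.coord_apply, Module.Basis.repr_self, Finsupp.single_apply, if_neg hi]

theorem tbToFun_tbFun (f : Fin n → ι) :
    tbToFun n c (tbFun n c f) = Finsupp.single f 1 := by
  have h : (fun g => tbCoord n c g (tbFun n c f)) = ⇑(Finsupp.single f (1 : k)) := by
    funext g
    rw [tbCoord_tbFun, Finsupp.single_apply]
  calc tbToFun n c (tbFun n c f)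
      = (Finsupp.linearEquivFunOnFinite k k (Fin n → ι)).symm
          (fun g => tbCoord n c g (tbFun n c f)) := rfl
    _ = Finsupp.single f 1 := by rw [h, Finsupp.linearEquivFunOnFinite_symm_coe]

theorem tbToFun_comp_tbOfFun : (tbToFun n c).comp (tbOfFun n c) = LinearMap.id := by
  apply Finsupp.lhom_ext
  intro f a
  simp only [LinearMap.comp_apply, tbOfFun, Finsupp.linearCombination_single,
    LinearMap.id_apply, map_smul, tbToFun_tbFun, Finsupp.smul_single, smul_eq_mul, mul_one]

theorem tbOfFun_comp_tbToFun : (tbOfFun n c).comp (tbToFun n c) = LinearMap.id := by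
  apply PiTensorProduct.ext
  apply MultilinearMap.ext
  intro v
  simp only [LinearMap.compMultilinearMap_apply, LinearMap.comp_apply, LinearMap.id_apply]
  have h1 : tbToFun n c (tprod k v)
      = (Finsupp.linearEquivFunOnFinite k k (Fin n → ι)).symm
          (fun f => ∏ i, c.coord (f i) (v i)) := by
    have : (fun f => tbCoord n c f (tprod k v)) = fun f => ∏ i, c.coord (f i) (v i) := by
      funext f; rw [tbCoord_tprod]
    calc tbToFun n c (tprod k v)
        = (Finsupp.linearEquivFunOnFinite k k (Fin n → ι)).symm
            (fun f => tbCoord n c f (tprod k v)) := rfl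
      _ = _ := by rw [this]
  rw [h1]
  rw [tbOfFun, Finsupp.linearCombination_apply, Finsupp.sum_fintype]
  swap
  · intro f; exact zero_smul k _
  · -- expand `tprod v` in the basis
    conv_rhs => rw [show v = fun i => ∑ j : ι, c.repr (v i) j • c j by
      funext i; rw [Module.Basis.sum_repr]]
    rw [MultilinearMap.map_sum (tprod k (s := fun _ : Fin n => W))
      (g := fun i j => c.repr (v i) j • c j)]
    apply Finset.sum_congr rfl
    intro f _
    rw [MultilinearMap.map_smul_univ]
    simp [tbFun, Module.Basis.coord_apply, Finsupp.linearEquivFunOnFinite]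

/-- The basis of the tensor power indexed by functions `Fin n → ι`. -/
def tensorBasis : Module.Basis (Fin n → ι) k (⨂[k] _ : Fin n, W) :=
  Module.Basis.ofRepr (LinearEquiv.ofLinear (tbToFun n c) (tbOfFun n c)
    (tbToFun_comp_tbOfFun n c) (tbOfFun_comp_tbToFun n c))

theorem tensorBasis_apply (f : Fin n → ι) :
    tensorBasis n c f = tprod k fun i => c (f i) := by
  rw [show (tensorBasis n c f : ⨂[k] _ : Fin n, W)
      = (tensorBasis n c).repr.symm (Finsupp.single f 1) from (Module.Basis.repr_symm_single_one _ _).symm]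
  show tbOfFun n c (Finsupp.single f 1) = _
  rw [tbOfFun, Finsupp.linearCombination_single, one_smul, tbFun]

end TensorBasis

/-! ### The permutation action on index functions, and counting orbits -/

section Orbits

variable (n : ℕ) (α : Type*)

/-- `Equiv.Perm (Fin n)` acts on `Fin n → α` by `e • f = f ∘ e.symm`. -/
def actHom : Equiv.Perm (Fin n) →* Equiv.Perm (Fin n → α) :=
  MonoidHom.mk' (fun e => e.arrowCongr (Equiv.refl α)) (by
    intro a b
    ext f i
    rfl)

theorem actHom_apply (e : Equiv.Perm (Fin n)) (f : Fin n → α) :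
    actHom n α e f = f ∘ e.symm := rfl

variable [Fintype α] [DecidableEq α] [LinearOrder α]

theorem multiset_eq_of_rel {f : Fin n → α} (e : Equiv.Perm (Fin n)) :
    Multiset.map (f ∘ e) Finset.univ.val = Multiset.map f Finset.univ.val := by
  have h : Multiset.map (⇑e) Finset.univ.val = Finset.univ.val := by
    have := congrArg Finset.val (Finset.map_univ_equiv e)
    simpa [Finset.map_val] using this
  calc Multiset.map (f ∘ e) Finset.univ.val
      = Multiset.map f (Multiset.map (⇑e) Finset.univ.val) := by
        rw [Multiset.map_map]
    _ = Multiset.map f Finset.univ.val := by rw [h]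

theorem coe_ofFn_eq (f : Fin n → α) :
    (↑(List.ofFn f) : Multiset α) = Multiset.map f Finset.univ.val := by
  rw [List.ofFn_eq_map]
  rfl

/-- Orbits of functions `Fin n → α` under permutations of the domain are multisets. -/
def orbitEquivSym : Quotient (actRel (actHom n α)) ≃ Sym α n := by
  refine Equiv.ofBijective
    (Quotient.lift (fun f : Fin n → α =>
      (⟨Multiset.map f Finset.univ.val, by simp⟩ : Sym α n)) ?_) ⟨?_, ?_⟩
  · rintro f _ ⟨e, rfl⟩
    apply Subtype.ext
    dsimp only
    rw [actHom_apply]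
    exact (multiset_eq_of_rel n α (f := f) e.symm).symm
  · -- injectivity
    rintro ⟨f⟩ ⟨g⟩ h
    have hm : Multiset.map f Finset.univ.val = Multiset.map g Finset.univ.val :=
      congrArg Subtype.val h
    have hfs : Monotone (f ∘ Tuple.sort f) := Tuple.monotone_sort f
    have hgs : Monotone (g ∘ Tuple.sort g) := Tuple.monotone_sort g
    have hperm : (List.ofFn (f ∘ Tuple.sort f)).Perm (List.ofFn (g ∘ Tuple.sort g)) := by
      rw [← Multiset.coe_eq_coe, coe_ofFn_eq, coe_ofFn_eq,
        multiset_eq_of_rel n α (f := f) (Tuple.sort f),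
        multiset_eq_of_rel n α (f := g) (Tuple.sort g), hm]
    have hfun : f ∘ Tuple.sort f = g ∘ Tuple.sort g :=
      List.ofFn_injective (List.Perm.eq_of_sortedLE
        (List.sortedLE_ofFn_iff.mpr hfs) (List.sortedLE_ofFn_iff.mpr hgs) hperm)
    apply Quotient.sound
    refine ⟨Tuple.sort g * (Tuple.sort f)⁻¹, ?_⟩
    rw [actHom_apply]
    funext i
    have hsymm : (Tuple.sort g * (Tuple.sort f)⁻¹ : Equiv.Perm (Fin n)).symm i
        = Tuple.sort f ((Tuple.sort g)⁻¹ i) := by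
      rw [← Equiv.Perm.inv_def, mul_inv_rev, inv_inv, Equiv.Perm.mul_apply]
    show f ((Tuple.sort g * (Tuple.sort f)⁻¹ : Equiv.Perm (Fin n)).symm i) = g i
    rw [hsymm]
    have := congrFun hfun ((Tuple.sort g)⁻¹ i)
    simp only [Function.comp_apply] at this
    rw [this, ← Equiv.Perm.mul_apply, mul_inv_cancel, Equiv.Perm.one_apply]
  · -- surjectivity
    rintro ⟨m, hm⟩
    obtain ⟨l, rfl⟩ : ∃ l : List α, (↑l : Multiset α) = m := ⟨m.toList, by simp⟩
    have hl : l.length = n := by simpa using hm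
    refine ⟨Quotient.mk _ (fun i : Fin n => l.get (Fin.cast hl.symm i)), ?_⟩
    apply Subtype.ext
    show Multiset.map (fun i : Fin n => l.get (Fin.cast hl.symm i)) Finset.univ.val
      = (↑l : Multiset α)
    rw [← coe_ofFn_eq]
    congr 1
    apply List.ext_getElem
    · simp [hl]
    · intro i h1 h2
      simp [List.getElem_ofFn]

theorem card_orbits [Fintype (Quotient (actRel (actHom n α)))] :
    Fintype.card (Quotient (actRel (actHom n α)))
      = (Fintype.card α + n - 1).choose n := by
  rw [Fintype.card_congr (orbitEquivSym n α), Sym.card_sym_eq_multichoose,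
    Nat.multichoose_eq]

end Orbits

end Helpers

noncomputable section

variable (k : Type*) [Field k] (V : Type*) [AddCommGroup V] [Module k V]
  [FiniteDimensional k V] (n : ℕ)

theorem naturalPairing_tprod (φ : Fin n → (V →ₗ[k] k)) (v : Fin n → V) :
    naturalPairing k V n (tprod k φ) (tprod k v) = ∏ i, φ i (v i) := by
  simp [naturalPairing, PiTensorProduct.piTensorHomMap_tprod_tprod,
    PiTensorProduct.lift.tprod, MultilinearMap.mkPiAlgebra_apply]

theorem naturalPairing_perm (e : Equiv.Perm (Fin n)) :
    (naturalPairing k V n).comp (permD k V n e)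
      = (permV k V n e⁻¹).dualMap.comp (naturalPairing k V n) := by
  apply PiTensorProduct.ext
  apply MultilinearMap.ext
  intro φ
  apply PiTensorProduct.ext
  apply MultilinearMap.ext
  intro v
  simp only [LinearMap.compMultilinearMap_apply, LinearMap.comp_apply,
    LinearMap.dualMap_apply, permD, permV, LinearEquiv.coe_coe,
    PiTensorProduct.reindex_tprod, naturalPairing_tprod]
  simp only [Equiv.Perm.inv_def, Equiv.symm_symm]
  calc ∏ i, φ (e.symm i) (v i)
      = ∏ i, φ (e.symm (e i)) (v (e i)) := (Equiv.prod_comp e _).symm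
    _ = ∏ i, φ i (v (e i)) := by simp

theorem naturalPairing_vanish (x : (⨂[k] _ : Fin n, (V →ₗ[k] k)))
    (hx : x ∈ symRelations k V n) (t : ⨂[k] _ : Fin n, V) (ht : t ∈ symPD k V n) :
    naturalPairing k V n x t = 0 := by
  refine Submodule.iSup_induction (motive := fun x => naturalPairing k V n x t = 0) _ hx ?_ ?_ ?_
  · rintro e x ⟨y, rfl⟩
    have hperm : permV k V n e⁻¹ t = t := by
      have := (Submodule.mem_iInf _).mp ht e⁻¹
      simpa [LinearMap.mem_eqLocus] using this
    have := LinearMap.congr_fun (naturalPairing_perm k V n e) y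
    have h2 := LinearMap.congr_fun this t
    simp only [LinearMap.comp_apply, LinearMap.dualMap_apply] at h2
    simp only [LinearMap.sub_apply, LinearMap.id_apply, map_sub, LinearMap.sub_apply]
    rw [h2, hperm, sub_self]
  · simp
  · intro x y hx hy
    simp [map_add, hx, hy]

theorem symPow_dual_perfect_pairing :
    -- the natural pairing kills the symmetrization relations against symmetric tensors,
    -- hence descends to a pairing `Sym^n(V*) × Sym^{PD,n}(V) → k` ...
    (∀ x ∈ symRelations k V n, ∀ t ∈ symPD k V n, naturalPairing k V n x t = 0) ∧
    -- ... which is perfect: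
    (∃ B : ((⨂[k] _ : Fin n, (V →ₗ[k] k)) ⧸ symRelations k V n) →ₗ[k]
        Module.Dual k (symPD k V n),
      (∀ (f : ⨂[k] _ : Fin n, (V →ₗ[k] k)) (t : symPD k V n),
        B (Submodule.Quotient.mk f) t = naturalPairing k V n f t) ∧
      Function.Bijective B) ∧
    -- in particular both spaces have dimension `C(dim V + n - 1, n)`:
    Module.finrank k (symPD k V n) = (Module.finrank k V + n - 1).choose n ∧
    Module.finrank k ((⨂[k] _ : Fin n, (V →ₗ[k] k)) ⧸ symRelations k V n) =
      (Module.finrank k V + n - 1).choose n := by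
  classical
  set d := Module.finrank k V with hd
  set bV : Module.Basis (Fin d) k V := Module.finBasis k V with hbV
  set bW : Module.Basis (Fin d) k (Module.Dual k V) := bV.dualBasis with hbW
  set tbV : Module.Basis (Fin n → Fin d) k (⨂[k] _ : Fin n, V) := tensorBasis n bV with htbV
  set tbW : Module.Basis (Fin n → Fin d) k (⨂[k] _ : Fin n, (V →ₗ[k] k)) := tensorBasis n bW with htbW
  haveI : FiniteDimensional k (⨂[k] _ : Fin n, V) := Module.Finite.of_basis tbV
  haveI : FiniteDimensional k (⨂[k] _ : Fin n, (V →ₗ[k] k)) :=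
    Module.Finite.of_basis tbW
  -- the permutation action on basis vectors
  have hTV : ∀ (e : Equiv.Perm (Fin n)) (f : Fin n → Fin d),
      permV k V n e (tbV f) = tbV (actHom n (Fin d) e f) := by
    intro e f
    rw [htbV, tensorBasis_apply, tensorBasis_apply, actHom_apply]
    simp only [permV, LinearEquiv.coe_coe, PiTensorProduct.reindex_tprod]
    rfl
  have hTW : ∀ (e : Equiv.Perm (Fin n)) (f : Fin n → Fin d),
      permD k V n e (tbW f) = tbW (actHom n (Fin d) e f) := by
    intro e f
    rw [htbW, tensorBasis_apply, tensorBasis_apply, actHom_apply]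
    simp only [permD, LinearEquiv.coe_coe, PiTensorProduct.reindex_tprod]
    rfl
  -- orbit counting
  letI : Fintype (Quotient (actRel (actHom n (Fin d)))) :=
    Fintype.ofEquiv _ (orbitEquivSym n (Fin d)).symm
  have hcard : Fintype.card (Quotient (actRel (actHom n (Fin d)))) = (d + n - 1).choose n := by
    rw [card_orbits n (Fin d), Fintype.card_fin]
  -- dimensions
  have e1 : Module.finrank k (symPD k V n) = (d + n - 1).choose n := by
    rw [show symPD k V n
        = ⨅ e : Equiv.Perm (Fin n), LinearMap.eqLocus (permV k V n e) LinearMap.id from rfl]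
    rw [LinearEquiv.finrank_eq (invEquiv (actHom n (Fin d)) tbV (permV k V n) hTV)]
    rw [Module.finrank_finsupp_self, hcard]
  have e2 : Module.finrank k ((⨂[k] _ : Fin n, (V →ₗ[k] k)) ⧸ symRelations k V n)
      = (d + n - 1).choose n := by
    have h := LinearEquiv.finrank_eq (coinvEquiv (actHom n (Fin d)) tbW (permD k V n) hTW)
    rw [Module.finrank_finsupp_self, hcard] at h
    exact h
  -- surjectivity of the pairing map
  have hprod_ite : ∀ f g : Fin n → Fin d,
      (∏ i, if f i = g i then (1 : k) else 0) = if f = g then (1 : k) else 0 := by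
    intro f g
    by_cases h : f = g
    · subst h; simp
    · obtain ⟨i, hi⟩ := Function.ne_iff.mp h
      rw [if_neg h]
      exact Finset.prod_eq_zero (Finset.mem_univ i) (if_neg hi)
  have hNPbasis : ∀ g : Fin n → Fin d,
      naturalPairing k V n (tbW g) = tbV.dualBasis g := by
    intro g
    apply tbV.ext
    intro f
    rw [Module.Basis.dualBasis_apply_self]
    rw [htbV, htbW, tensorBasis_apply, tensorBasis_apply, naturalPairing_tprod]
    have : ∀ i, bW (g i) (bV (f i)) = if f i = g i then (1 : k) else 0 := by
      intro i
      rw [hbW, Module.Basis.dualBasis_apply_self]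
    rw [Finset.prod_congr rfl fun i _ => this i, hprod_ite]
  have hNPsurj : Function.Surjective (naturalPairing k V n) := by
    have heq : naturalPairing k V n
        = ↑(tbW.equiv tbV.dualBasis (Equiv.refl _)) := by
      apply tbW.ext
      intro g
      rw [hNPbasis g]
      simp
    rw [heq]
    exact (tbW.equiv tbV.dualBasis (Equiv.refl _)).surjective
  -- the descended map
  set P' : (⨂[k] _ : Fin n, (V →ₗ[k] k)) →ₗ[k] Module.Dual k (symPD k V n) :=
    ((symPD k V n).subtype.dualMap).comp (naturalPairing k V n) with hP'
  have hker : symRelations k V n ≤ LinearMap.ker P' := by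
    intro x hx
    rw [LinearMap.mem_ker]
    apply LinearMap.ext
    intro t
    simp only [hP', LinearMap.comp_apply, LinearMap.dualMap_apply, LinearMap.zero_apply,
      Submodule.coe_subtype]
    exact naturalPairing_vanish k V n x hx t t.2
  set B : ((⨂[k] _ : Fin n, (V →ₗ[k] k)) ⧸ symRelations k V n) →ₗ[k]
      Module.Dual k (symPD k V n) := (symRelations k V n).liftQ P' hker with hB
  have hBapp : ∀ (f : ⨂[k] _ : Fin n, (V →ₗ[k] k)) (t : symPD k V n),
      B (Submodule.Quotient.mk f) t = naturalPairing k V n f t := by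
    intro f t
    rw [hB, Submodule.liftQ_apply]
    rfl
  have hBsurj : Function.Surjective B := by
    have hP'surj : Function.Surjective P' := by
      rw [hP', LinearMap.coe_comp]
      exact Function.Surjective.comp
        (LinearMap.dualMap_surjective_of_injective (Submodule.injective_subtype _)) hNPsurj
    have hcomp : ⇑B ∘ ⇑(symRelations k V n).mkQ = ⇑P' := by
      funext x
      simp [hB, Submodule.liftQ_apply]
    have : Function.Surjective (⇑B ∘ ⇑(symRelations k V n).mkQ) := by
      rw [hcomp]; exact hP'surj
    exact this.of_comp
  have hBinj : Function.Injective B := by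
    have hdim : Module.finrank k ((⨂[k] _ : Fin n, (V →ₗ[k] k)) ⧸ symRelations k V n)
        = Module.finrank k (Module.Dual k (symPD k V n)) := by
      rw [Subspace.dual_finrank_eq, e1, e2]
    exact (LinearMap.injective_iff_surjective_of_finrank_eq_finrank hdim).mpr hBsurj
  exact ⟨fun x hx t ht => naturalPairing_vanish k V n x hx t ht,
    ⟨B, hBapp, hBinj, hBsurj⟩, e1, e2⟩

end
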